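/- The function g(z) = e^{−z} − 1 + z has no zeros in the open right half-plane {z ∈ ℂ : Re z > 0}; equivalently, e^{−z} − 1 ≠ −z whenever Re z > 0. -/
import Mathlib


theorem g_ne_zero (z : ℂ) (hz : 0 < z.re) :
    Complex.exp (-z) - 1 + z ≠ 0 := by
  intro h
  have heq : Complex.exp (-z) = 1 - z := by linear_combination h
  set x := z.re with hx
  set y := z.im with hy
  have him : Real.exp (-x) * Real.sin (-y) = -y := by
    have := congrArg Complex.im heq
    simpa [Complex.exp_im] using this
  have hre : Real.exp (-x) * Real.cos (-y) = 1 - x := by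
    have := congrArg Complex.re heq
    simpa [Complex.exp_re] using this
  have hexp1 : Real.exp (-x) < 1 := by
    have := Real.exp_lt_exp.2 (show -x < 0 by linarith)
    simpa using this
  have hy0 : y = 0 := by
    by_contra hy0
    have habs : |y| = Real.exp (-x) * |Real.sin y| := by
      have : Real.exp (-x) * Real.sin y = y := by
        simpa using him
      calc |y| = |Real.exp (-x) * Real.sin y| := by rw [this]
        _ = Real.exp (-x) * |Real.sin y| := by
            rw [abs_mul, abs_of_pos (Real.exp_pos _)]
    have hsin : |Real.sin y| ≤ |y| := Real.abs_sin_le_abs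
    have hypos : 0 < |y| := abs_pos.2 hy0
    nlinarith [Real.exp_pos (-x)]
  have : Real.exp (-x) = 1 - x := by
    rw [hy0] at hre; simpa using hre
  have := Real.add_one_lt_exp (x := -x) (by linarith)
  linarith
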